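/- Let A₀ = x₁x₂² − 2x₁²x₃ + x₀x₂x₃, A₁ = x₀(3x₁x₃ − 2x₂²), A₂ = x₀(x₁x₂ − 3x₀x₃), A₃ = x₀(2x₀x₂ − x₁²) in ℚ[x₀,x₁,x₂,x₃]. Then the radical of the ideal ⟨A₀,A₁,A₂,A₃⟩ equals the intersection of the three ideals ⟨x₀, x₂² − 2x₁x₃⟩, ⟨x₀, x₁⟩, and ⟨2x₂² − 3x₁x₃, x₁x₂ − 3x₀x₃, x₁² − 2x₀x₂⟩. (The singular locus of the standard exceptional foliation consists of a conic in the plane x₀ = 0, the line x₀ = x₁ = 0, and a twisted cubic.) -/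

import Mathlib

open MvPolynomial

noncomputable section

abbrev R4 := MvPolynomial (Fin 4) ℚ
abbrev R2 := MvPolynomial (Fin 2) ℚ

/-- exponent vector in `Fin 4 →₀ ℕ` -/
def ee (d a b c : ℕ) : Fin 4 →₀ ℕ :=
  Finsupp.single 0 d + Finsupp.single 1 a + Finsupp.single 2 b + Finsupp.single 3 c

lemma ee_apply0 (d a b c : ℕ) : ee d a b c 0 = d := by simp [ee, Finsupp.single_apply]
lemma ee_apply1 (d a b c : ℕ) : ee d a b c 1 = a := by simp [ee, Finsupp.single_apply]
lemma ee_apply2 (d a b c : ℕ) : ee d a b c 2 = b := by simp [ee, Finsupp.single_apply]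
lemma ee_apply3 (d a b c : ℕ) : ee d a b c 3 = c := by simp [ee, Finsupp.single_apply]

lemma prodX_eq (d a b c : ℕ) :
    (X 0 : R4) ^ d * X 1 ^ a * X 2 ^ b * X 3 ^ c = monomial (ee d a b c) 1 := by
  simp [ee, X_pow_eq_monomial, monomial_mul]

lemma ee_eq_self (m : Fin 4 →₀ ℕ) : ee (m 0) (m 1) (m 2) (m 3) = m := by
  refine Finsupp.ext fun i => ?_
  fin_cases i
  · exact ee_apply0 _ _ _ _
  · exact ee_apply1 _ _ _ _
  · exact ee_apply2 _ _ _ _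
  · exact ee_apply3 _ _ _ _

lemma monomial_one_eq (m : Fin 4 →₀ ℕ) :
    monomial m (1 : ℚ) = (X 0 : R4) ^ (m 0) * X 1 ^ (m 1) * X 2 ^ (m 2) * X 3 ^ (m 3) := by
  rw [prodX_eq, ee_eq_self]


lemma aeval_mono_mono (w : Fin 4 → (Fin 2 →₀ ℕ)) (κ : Fin 4 → ℚ) (m : Fin 4 →₀ ℕ) (a : ℚ) :
    aeval (fun i => (monomial (w i) (κ i) : R2)) (monomial m a)
      = monomial (m 0 • w 0 + m 1 • w 1 + m 2 • w 2 + m 3 • w 3)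
          ((κ 0 ^ m 0 * κ 1 ^ m 1 * κ 2 ^ m 2 * κ 3 ^ m 3) * a) := by
  rw [aeval_monomial, Finsupp.prod_fintype _ _ (fun i => pow_zero _), Fin.prod_univ_four]
  simp only [monomial_pow, algebraMap_eq, C_apply, monomial_mul]
  congr 1
  · abel
  · ring

/-- Master lemma: kernel of a monomial substitution is contained in an ideal `S`,
given a normal-form reduction modulo `S` and injectivity on normal monomials. -/
lemma ker_le_ideal (g : Fin 4 → R2) (S : Ideal R4)
    (N : (Fin 4 →₀ ℕ) → Prop)
    (E : (Fin 4 →₀ ℕ) → (Fin 2 →₀ ℕ))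
    (c : (Fin 4 →₀ ℕ) → ℚ)
    (hφ : ∀ m a, aeval g (monomial m a) = monomial (E m) (c m * a))
    (hc : ∀ m, N m → c m ≠ 0)
    (hE : ∀ m m', N m → N m' → E m = E m' → m = m')
    (hred : ∀ m : Fin 4 →₀ ℕ, ∃ r : R4, (∀ u ∈ r.support, N u) ∧ monomial m (1:ℚ) - r ∈ S)
    (hS : ∀ s ∈ S, aeval g s = 0)
    (p : R4) (hp : aeval g p = 0) : p ∈ S := by
  -- reduce arbitrary p to normal form
  have main : ∀ q : R4, ∃ r : R4, (∀ u ∈ r.support, N u) ∧ q - r ∈ S := by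
    intro q
    induction q using MvPolynomial.induction_on' with
    | monomial m a =>
        obtain ⟨r, hr, hmem⟩ := hred m
        refine ⟨a • r, fun u hu => hr u (Finsupp.support_smul hu), ?_⟩
        have : monomial m a - a • r = a • (monomial m (1:ℚ) - r) := by
          rw [smul_sub]
          congr 1
          rw [smul_monomial, smul_eq_mul, mul_one]
        rw [this, ← C_mul']
        exact Ideal.mul_mem_left _ _ hmem
    | add p q hp hq =>
        obtain ⟨r1, hr1, hm1⟩ := hp
        obtain ⟨r2, hr2, hm2⟩ := hq
        refine ⟨r1 + r2, fun u hu => ?_, ?_⟩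
        · rcases Finset.mem_union.1 (MvPolynomial.support_add hu) with h | h
          · exact hr1 u h
          · exact hr2 u h
        · have : p + q - (r1 + r2) = (p - r1) + (q - r2) := by ring
          rw [this]; exact Ideal.add_mem _ hm1 hm2
  obtain ⟨r, hrN, hrS⟩ := main p
  -- the normal form also lies in the kernel
  have hr0 : aeval g r = 0 := by
    have : r = p - (p - r) := by ring
    rw [this, map_sub, hp, hS _ hrS, sub_zero]
  -- hence it is zero
  have hrz : r = 0 := by
    by_contra hne
    obtain ⟨u0, hu0⟩ := Finset.nonempty_iff_ne_empty.2
      (fun h => hne (MvPolynomial.support_eq_empty.1 h))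
    have hcoeff : coeff (E u0) (aeval g r) = c u0 * coeff u0 r := by
      conv_lhs => rw [← MvPolynomial.support_sum_monomial_coeff r]
      rw [map_sum, coeff_sum]
      rw [Finset.sum_eq_single_of_mem u0 hu0]
      · rw [hφ, coeff_monomial, if_pos rfl]
      · intro b hb hbne
        rw [hφ, coeff_monomial, if_neg]
        intro hEb
        exact hbne (hE b u0 (hrN b hb) (hrN u0 hu0) hEb)
    rw [hr0, coeff_zero] at hcoeff
    have := mul_eq_zero.1 hcoeff.symm
    rcases this with h | h
    · exact hc u0 (hrN u0 hu0) h
    · exact MvPolynomial.mem_support_iff.1 hu0 h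
  rw [hrz, sub_zero] at hrS
  exact hrS

lemma memspan2 {a b p : R4} (u v : R4) (h : p = u * a + v * b) :
    p ∈ Ideal.span ({a, b} : Set R4) := by
  subst h
  exact Ideal.add_mem _
    (Ideal.mul_mem_left _ _ (Ideal.subset_span (by simp)))
    (Ideal.mul_mem_left _ _ (Ideal.subset_span (by simp)))

lemma memspan3 {a b c p : R4} (u v w : R4) (h : p = u * a + v * b + w * c) :
    p ∈ Ideal.span ({a, b, c} : Set R4) := by
  subst h
  exact Ideal.add_mem _ (Ideal.add_mem _
    (Ideal.mul_mem_left _ _ (Ideal.subset_span (by simp)))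
    (Ideal.mul_mem_left _ _ (Ideal.subset_span (by simp))))
    (Ideal.mul_mem_left _ _ (Ideal.subset_span (by simp)))

lemma memspan4 {a b c d p : R4} (u v w y : R4) (h : p = u * a + v * b + w * c + y * d) :
    p ∈ Ideal.span ({a, b, c, d} : Set R4) := by
  subst h
  exact Ideal.add_mem _ (Ideal.add_mem _ (Ideal.add_mem _
    (Ideal.mul_mem_left _ _ (Ideal.subset_span (by simp)))
    (Ideal.mul_mem_left _ _ (Ideal.subset_span (by simp))))
    (Ideal.mul_mem_left _ _ (Ideal.subset_span (by simp))))
    (Ideal.mul_mem_left _ _ (Ideal.subset_span (by simp)))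

/-! ### the line ideal `⟨X 0, X 1⟩` -/

def w2 : Fin 4 → (Fin 2 →₀ ℕ) := ![0, 0, Finsupp.single 0 1, Finsupp.single 1 1]
def κ2 : Fin 4 → ℚ := ![0, 0, 1, 1]
def g2 : Fin 4 → R2 := fun i => monomial (w2 i) (κ2 i)

lemma S2_isPrime : (Ideal.span ({X 0, X 1} : Set R4)).IsPrime := by
  have hkill : ∀ s ∈ Ideal.span ({X 0, X 1} : Set R4), aeval g2 s = 0 := by
    intro s hs
    refine RingHom.mem_ker.1 ((Ideal.span_le.2 ?_) hs : s ∈ RingHom.ker (aeval g2 : R4 →ₐ[ℚ] R2))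
    rintro x (rfl | rfl) <;>
      simp [RingHom.mem_ker, aeval_X, g2, w2, κ2, SetLike.mem_coe]
  have hker : Ideal.span ({X 0, X 1} : Set R4) = RingHom.ker (aeval g2 : R4 →ₐ[ℚ] R2) := by
    apply le_antisymm
    · intro s hs
      exact RingHom.mem_ker.2 (hkill s hs)
    · intro p hp
      rw [RingHom.mem_ker] at hp
      apply ker_le_ideal g2 _ (fun m => m 0 = 0 ∧ m 1 = 0)
        (fun m => m 0 • w2 0 + m 1 • w2 1 + m 2 • w2 2 + m 3 • w2 3)
        (fun m => κ2 0 ^ m 0 * κ2 1 ^ m 1 * κ2 2 ^ m 2 * κ2 3 ^ m 3)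
        (fun m a => aeval_mono_mono w2 κ2 m a) _ _ _ _ p hp
      · rintro m ⟨h0, h1⟩
        simp [κ2, h0, h1]
      · rintro m m' ⟨h0, h1⟩ ⟨h0', h1'⟩ hE
        have e0 := DFunLike.congr_fun hE 0
        have e1 := DFunLike.congr_fun hE 1
        simp [w2, Finsupp.single_apply] at e0 e1
        rw [← ee_eq_self m, ← ee_eq_self m', h0, h1, h0', h1', e0, e1]
      · intro m
        by_cases h0 : m 0 = 0
        · by_cases h1 : m 1 = 0
          · refine ⟨monomial m 1, ?_, by simp⟩
            intro u hu
            rw [support_monomial, if_neg one_ne_zero] at hu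
            simp at hu
            subst hu
            exact ⟨h0, h1⟩
          · refine ⟨0, by simp, ?_⟩
            rw [sub_zero, monomial_one_eq]
            obtain ⟨k, hk⟩ : ∃ k, m 1 = k + 1 := ⟨m 1 - 1, by omega⟩
            refine memspan2 0 (X 0 ^ (m 0) * X 1 ^ k * X 2 ^ (m 2) * X 3 ^ (m 3)) ?_
            rw [hk]; ring
        · refine ⟨0, by simp, ?_⟩
          rw [sub_zero, monomial_one_eq]
          obtain ⟨k, hk⟩ : ∃ k, m 0 = k + 1 := ⟨m 0 - 1, by omega⟩
          refine memspan2 (X 0 ^ k * X 1 ^ (m 1) * X 2 ^ (m 2) * X 3 ^ (m 3)) 0 ?_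
          rw [hk]; ring
      · exact hkill
  rw [hker]
  exact RingHom.ker_isPrime _

lemma monomial_ee (q : ℚ) (d a b c : ℕ) :
    (monomial (ee d a b c) q : R4) = C q * (X 0 ^ d * X 1 ^ a * X 2 ^ b * X 3 ^ c) := by
  rw [prodX_eq, C_mul', smul_monomial, smul_eq_mul, mul_one]

/-! ### the conic ideal `⟨X 0, X 2 ^ 2 - 2 * X 1 * X 3⟩` -/

def w1 : Fin 4 → (Fin 2 →₀ ℕ) :=
  ![0, Finsupp.single 0 2, Finsupp.single 0 1 + Finsupp.single 1 1, Finsupp.single 1 2]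
def κ1 : Fin 4 → ℚ := ![0, 1, 2, 2]
def g1 : Fin 4 → R2 := fun i => monomial (w1 i) (κ1 i)

lemma monomial_R2 (q : ℚ) (a b : ℕ) :
    (monomial (Finsupp.single 0 a + Finsupp.single 1 b) q : R2) = C q * (X 0 ^ a * X 1 ^ b) := by
  rw [X_pow_eq_monomial, X_pow_eq_monomial, monomial_mul, one_mul, C_apply, monomial_mul,
    zero_add, mul_one]

lemma C2_R4 : (C (2:ℚ) : R4) = 2 := by rw [map_ofNat]

lemma g1_0 : g1 0 = 0 := by
  show monomial 0 (0:ℚ) = _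
  simp [monomial_zero]

lemma g1_1 : g1 1 = X 0 ^ 2 := by
  show monomial (Finsupp.single 0 2) (1:ℚ) = _
  rw [show (Finsupp.single 0 2 : Fin 2 →₀ ℕ) = Finsupp.single 0 2 + Finsupp.single 1 0 by simp,
    monomial_R2, map_one]
  simp

lemma g1_2 : g1 2 = 2 * X 0 * X 1 := by
  show monomial (Finsupp.single 0 1 + Finsupp.single 1 1) (2:ℚ) = _
  rw [monomial_R2, map_ofNat]
  ring

lemma g1_3 : g1 3 = 2 * X 1 ^ 2 := by
  show monomial (Finsupp.single 1 2) (2:ℚ) = _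
  rw [show (Finsupp.single 1 2 : Fin 2 →₀ ℕ) = Finsupp.single 0 0 + Finsupp.single 1 2 by simp,
    monomial_R2, map_ofNat]
  ring

lemma S1_isPrime : (Ideal.span ({X 0, X 2 ^ 2 - 2 * X 1 * X 3} : Set R4)).IsPrime := by
  have hkill : ∀ s ∈ Ideal.span ({X 0, X 2 ^ 2 - 2 * X 1 * X 3} : Set R4), aeval g1 s = 0 := by
    intro s hs
    refine RingHom.mem_ker.1 ((Ideal.span_le.2 ?_) hs :
      s ∈ RingHom.ker (aeval g1 : R4 →ₐ[ℚ] R2))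
    rintro x (rfl | rfl)
    · simp only [SetLike.mem_coe, RingHom.mem_ker, aeval_X, g1_0]
    · simp only [SetLike.mem_coe, RingHom.mem_ker, map_sub, map_mul, map_pow, map_ofNat,
        aeval_X, g1_0, g1_1, g1_2, g1_3]
      ring
  have hker : Ideal.span ({X 0, X 2 ^ 2 - 2 * X 1 * X 3} : Set R4)
      = RingHom.ker (aeval g1 : R4 →ₐ[ℚ] R2) := by
    apply le_antisymm
    · intro s hs
      exact RingHom.mem_ker.2 (hkill s hs)
    · intro p hp
      rw [RingHom.mem_ker] at hp
      apply ker_le_ideal g1 _ (fun m => m 0 = 0 ∧ m 2 ≤ 1)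
        (fun m => m 0 • w1 0 + m 1 • w1 1 + m 2 • w1 2 + m 3 • w1 3)
        (fun m => κ1 0 ^ m 0 * κ1 1 ^ m 1 * κ1 2 ^ m 2 * κ1 3 ^ m 3)
        (fun m a => aeval_mono_mono w1 κ1 m a) _ _ _ _ p hp
      · rintro m ⟨h0, h2⟩
        simp only [κ1, Matrix.cons_val_zero, Matrix.cons_val_one, Matrix.head_cons,
          Matrix.cons_val_two, Matrix.tail_cons, Matrix.cons_val_three, h0, pow_zero]
        positivity
      · rintro m m' ⟨h0, h2⟩ ⟨h0', h2'⟩ hE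
        have e0 := DFunLike.congr_fun hE 0
        have e1 := DFunLike.congr_fun hE 1
        simp [w1, Finsupp.single_apply] at e0 e1
        have h1 : m 1 = m' 1 ∧ m 2 = m' 2 ∧ m 3 = m' 3 := by omega
        rw [← ee_eq_self m, ← ee_eq_self m', h0, h0', h1.1, h1.2.1, h1.2.2]
      · intro m
        by_cases h0 : m 0 = 0
        · set k := m 2 / 2 with hk
          set ε := m 2 % 2 with hε
          have hm2 : m 2 = 2 * k + ε := by omega
          refine ⟨monomial (ee 0 (m 1 + k) ε (m 3 + k)) ((2:ℚ) ^ k), ?_, ?_⟩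
          · intro u hu
            rw [support_monomial, if_neg (by positivity)] at hu
            simp only [Finset.mem_singleton] at hu
            subst hu
            rw [ee_apply0, ee_apply2]
            exact ⟨rfl, by omega⟩
          · obtain ⟨t, ht⟩ := sub_dvd_pow_sub_pow ((X 2 : R4) ^ 2) (2 * X 1 * X 3) k
            refine memspan2 0
              ((X 1 ^ (m 1) * X 2 ^ ε * X 3 ^ (m 3)) * t) ?_
            rw [monomial_one_eq, monomial_ee, h0, hm2,
              show (C ((2:ℚ) ^ k) : R4) = 2 ^ k by rw [map_pow, C2_R4]]
            linear_combination (X 1 ^ (m 1) * X 2 ^ ε * X 3 ^ (m 3)) * ht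
        · refine ⟨0, by simp, ?_⟩
          rw [sub_zero, monomial_one_eq]
          obtain ⟨k, hk⟩ : ∃ k, m 0 = k + 1 := ⟨m 0 - 1, by omega⟩
          refine memspan2 (X 0 ^ k * X 1 ^ (m 1) * X 2 ^ (m 2) * X 3 ^ (m 3)) 0 ?_
          rw [hk]; ring
      · exact hkill
  rw [hker]
  exact RingHom.ker_isPrime _

/-! ### the twisted cubic ideal -/

def S3I : Ideal R4 :=
  Ideal.span ({2 * X 2 ^ 2 - 3 * X 1 * X 3,
    X 1 * X 2 - 3 * X 0 * X 3,
    X 1 ^ 2 - 2 * X 0 * X 2} : Set R4)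

lemma hhalf : (C ((1:ℚ)/2) : R4) * 2 = 1 := by
  rw [show (2:R4) = C (2:ℚ) from C2_R4.symm, ← map_mul]
  norm_num

lemma red3_base (d a b c : ℕ) (h : a + b ≤ 1) :
    ∃ r : R4, (∀ u ∈ r.support, u 1 + u 2 ≤ 1) ∧
      (X 0 ^ d * X 1 ^ a * X 2 ^ b * X 3 ^ c : R4) - r ∈ S3I := by
  refine ⟨X 0 ^ d * X 1 ^ a * X 2 ^ b * X 3 ^ c, ?_, by simp⟩
  intro u hu
  rw [prodX_eq, support_monomial, if_neg one_ne_zero] at hu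
  simp only [Finset.mem_singleton] at hu
  subst hu
  rw [ee_apply1, ee_apply2]
  exact h

lemma red3 (n : ℕ) : ∀ d a b c : ℕ, a + b ≤ n →
    ∃ r : R4, (∀ u ∈ r.support, u 1 + u 2 ≤ 1) ∧
      (X 0 ^ d * X 1 ^ a * X 2 ^ b * X 3 ^ c : R4) - r ∈ S3I := by
  induction n with
  | zero => exact fun d a b c h => red3_base d a b c (by omega)
  | succ n ih =>
    intro d a b c h
    by_cases hab : a + b ≤ 1
    · exact red3_base d a b c hab
    · rcases Nat.lt_or_ge a 2 with ha | ha
      · by_cases ha1 : a = 1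
        · subst ha1
          obtain ⟨b', rfl⟩ : ∃ b', b = b' + 1 := ⟨b - 1, by omega⟩
          obtain ⟨r', hs', hm'⟩ := ih (d+1) 0 b' (c+1) (by omega)
          have h3 : (3:R4) * r' = (3:ℚ) • r' := by
            rw [← C_mul', map_ofNat]
          refine ⟨3 * r', ?_, ?_⟩
          · intro u hu
            rw [h3] at hu
            exact hs' u (Finsupp.support_smul hu)
          · have key : (X 0 ^ d * X 1 ^ 1 * X 2 ^ (b'+1) * X 3 ^ c : R4) - 3 * r'
                = (X 0 ^ d * X 2 ^ b' * X 3 ^ c) * (X 1 * X 2 - 3 * X 0 * X 3)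
                  + 3 * (X 0 ^ (d+1) * X 1 ^ 0 * X 2 ^ b' * X 3 ^ (c+1) - r') := by
              ring
            rw [key]
            refine Ideal.add_mem _ ?_ (Ideal.mul_mem_left _ _ hm')
            exact memspan3 0 (X 0 ^ d * X 2 ^ b' * X 3 ^ c) 0 (by ring)
        · -- a = 0, b ≥ 2
          have ha0 : a = 0 := by omega
          subst ha0
          obtain ⟨b', rfl⟩ : ∃ b', b = b' + 2 := ⟨b - 2, by omega⟩
          obtain ⟨r', hs', hm'⟩ := ih d 1 b' (c+1) (by omega)
          have h32 : (3:R4) * C ((1:ℚ)/2) = C ((3:ℚ)/2) := by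
            rw [show (3:R4) = C (3:ℚ) by rw [map_ofNat], ← map_mul]
            norm_num
          refine ⟨3 * C ((1:ℚ)/2) * r', ?_, ?_⟩
          · intro u hu
            rw [h32, C_mul'] at hu
            exact hs' u (Finsupp.support_smul hu)
          · have key : (X 0 ^ d * X 1 ^ 0 * X 2 ^ (b'+2) * X 3 ^ c : R4)
                - 3 * C ((1:ℚ)/2) * r'
                = (C ((1:ℚ)/2) * (X 0 ^ d * X 2 ^ b' * X 3 ^ c)) * (2 * X 2 ^ 2 - 3 * X 1 * X 3)
                  + 3 * C ((1:ℚ)/2) * (X 0 ^ d * X 1 ^ 1 * X 2 ^ b' * X 3 ^ (c+1) - r') := by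
              linear_combination (-(X 2 ^ 2 * (X 0 ^ d * X 2 ^ b' * X 3 ^ c))) * hhalf
            rw [key]
            refine Ideal.add_mem _ ?_ (Ideal.mul_mem_left _ _ hm')
            exact memspan3 (C ((1:ℚ)/2) * (X 0 ^ d * X 2 ^ b' * X 3 ^ c)) 0 0 (by ring)
      · obtain ⟨a', rfl⟩ : ∃ a', a = a' + 2 := ⟨a - 2, by omega⟩
        obtain ⟨r', hs', hm'⟩ := ih (d+1) a' (b+1) c (by omega)
        have h2 : (2:R4) * r' = (2:ℚ) • r' := by
          rw [← C_mul', map_ofNat]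
        refine ⟨2 * r', ?_, ?_⟩
        · intro u hu
          rw [h2] at hu
          exact hs' u (Finsupp.support_smul hu)
        · have key : (X 0 ^ d * X 1 ^ (a'+2) * X 2 ^ b * X 3 ^ c : R4) - 2 * r'
              = (X 0 ^ d * X 1 ^ a' * X 2 ^ b * X 3 ^ c) * (X 1 ^ 2 - 2 * X 0 * X 2)
                + 2 * (X 0 ^ (d+1) * X 1 ^ a' * X 2 ^ (b+1) * X 3 ^ c - r') := by
            ring
          rw [key]
          refine Ideal.add_mem _ ?_ (Ideal.mul_mem_left _ _ hm')
          exact memspan3 0 0 (X 0 ^ d * X 1 ^ a' * X 2 ^ b * X 3 ^ c) (by ring)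

def w3 : Fin 4 → (Fin 2 →₀ ℕ) :=
  ![Finsupp.single 0 3, Finsupp.single 0 2 + Finsupp.single 1 1,
    Finsupp.single 0 1 + Finsupp.single 1 2, Finsupp.single 1 3]
def κ3 : Fin 4 → ℚ := ![6, 6, 3, 1]
def g3 : Fin 4 → R2 := fun i => monomial (w3 i) (κ3 i)

lemma g3_0 : g3 0 = 6 * X 0 ^ 3 := by
  show monomial (Finsupp.single 0 3) (6:ℚ) = _
  rw [show (Finsupp.single 0 3 : Fin 2 →₀ ℕ) = Finsupp.single 0 3 + Finsupp.single 1 0 by simp,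
    monomial_R2, map_ofNat]
  ring

lemma g3_1 : g3 1 = 6 * X 0 ^ 2 * X 1 := by
  show monomial (Finsupp.single 0 2 + Finsupp.single 1 1) (6:ℚ) = _
  rw [monomial_R2, map_ofNat]
  ring

lemma g3_2 : g3 2 = 3 * X 0 * X 1 ^ 2 := by
  show monomial (Finsupp.single 0 1 + Finsupp.single 1 2) (3:ℚ) = _
  rw [monomial_R2, map_ofNat]
  ring

lemma g3_3 : g3 3 = X 1 ^ 3 := by
  show monomial (Finsupp.single 1 3) (1:ℚ) = _
  rw [show (Finsupp.single 1 3 : Fin 2 →₀ ℕ) = Finsupp.single 0 0 + Finsupp.single 1 3 by simp,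
    monomial_R2, map_one]
  ring

lemma S3_isPrime : S3I.IsPrime := by
  have hkill : ∀ s ∈ S3I, aeval g3 s = 0 := by
    intro s hs
    refine RingHom.mem_ker.1 ((Ideal.span_le.2 ?_) hs :
      s ∈ RingHom.ker (aeval g3 : R4 →ₐ[ℚ] R2))
    rintro x (rfl | rfl | rfl) <;>
      · simp only [SetLike.mem_coe, RingHom.mem_ker, map_sub, map_mul, map_pow, map_ofNat,
          aeval_X, g3_0, g3_1, g3_2, g3_3]
        ring
  have hker : S3I = RingHom.ker (aeval g3 : R4 →ₐ[ℚ] R2) := by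
    apply le_antisymm
    · intro s hs
      exact RingHom.mem_ker.2 (hkill s hs)
    · intro p hp
      rw [RingHom.mem_ker] at hp
      apply ker_le_ideal g3 _ (fun m => m 1 + m 2 ≤ 1)
        (fun m => m 0 • w3 0 + m 1 • w3 1 + m 2 • w3 2 + m 3 • w3 3)
        (fun m => κ3 0 ^ m 0 * κ3 1 ^ m 1 * κ3 2 ^ m 2 * κ3 3 ^ m 3)
        (fun m a => aeval_mono_mono w3 κ3 m a) _ _ _ _ p hp
      · intro m _
        simp only [κ3, Matrix.cons_val_zero, Matrix.cons_val_one, Matrix.head_cons,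
          Matrix.cons_val_two, Matrix.tail_cons, Matrix.cons_val_three]
        positivity
      · intro m m' hN hN' hE
        have e0 := DFunLike.congr_fun hE 0
        have e1 := DFunLike.congr_fun hE 1
        simp [w3, Finsupp.single_apply] at e0 e1
        have h4 : m 0 = m' 0 ∧ m 1 = m' 1 ∧ m 2 = m' 2 ∧ m 3 = m' 3 := by omega
        rw [← ee_eq_self m, ← ee_eq_self m', h4.1, h4.2.1, h4.2.2.1, h4.2.2.2]
      · intro m
        obtain ⟨r, hs, hm⟩ := red3 (m 1 + m 2) (m 0) (m 1) (m 2) (m 3) le_rfl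
        exact ⟨r, hs, by rwa [monomial_one_eq]⟩
      · exact hkill
  rw [hker]
  exact RingHom.ker_isPrime _

theorem stmt3 :
    (Ideal.span
        ({X 1 * X 2 ^ 2 - 2 * X 1 ^ 2 * X 3 + X 0 * X 2 * X 3,
          X 0 * (3 * X 1 * X 3 - 2 * X 2 ^ 2),
          X 0 * (X 1 * X 2 - 3 * X 0 * X 3),
          X 0 * (2 * X 0 * X 2 - X 1 ^ 2)} :
          Set (MvPolynomial (Fin 4) ℚ))).radical =
      Ideal.span ({X 0, X 2 ^ 2 - 2 * X 1 * X 3} : Set (MvPolynomial (Fin 4) ℚ)) ⊓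
      Ideal.span ({X 0, X 1} : Set (MvPolynomial (Fin 4) ℚ)) ⊓
      Ideal.span ({2 * X 2 ^ 2 - 3 * X 1 * X 3,
        X 1 * X 2 - 3 * X 0 * X 3,
        X 1 ^ 2 - 2 * X 0 * X 2} : Set (MvPolynomial (Fin 4) ℚ)) := by
  set I : Ideal R4 := Ideal.span
        ({X 1 * X 2 ^ 2 - 2 * X 1 ^ 2 * X 3 + X 0 * X 2 * X 3,
          X 0 * (3 * X 1 * X 3 - 2 * X 2 ^ 2),
          X 0 * (X 1 * X 2 - 3 * X 0 * X 3),
          X 0 * (2 * X 0 * X 2 - X 1 ^ 2)} : Set R4) with hI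
  set J1 : Ideal R4 := Ideal.span ({X 0, X 2 ^ 2 - 2 * X 1 * X 3} : Set R4) with hJ1
  set J2 : Ideal R4 := Ideal.span ({X 0, X 1} : Set R4) with hJ2
  have hIJ1 : I ≤ J1 := by
    rw [hI, Ideal.span_le]
    rintro x (rfl | rfl | rfl | rfl)
    · exact memspan2 (X 2 * X 3) (X 1) (by ring)
    · exact memspan2 (3 * X 1 * X 3 - 2 * X 2 ^ 2) 0 (by ring)
    · exact memspan2 (X 1 * X 2 - 3 * X 0 * X 3) 0 (by ring)
    · exact memspan2 (2 * X 0 * X 2 - X 1 ^ 2) 0 (by ring)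
  have hIJ2 : I ≤ J2 := by
    rw [hI, Ideal.span_le]
    rintro x (rfl | rfl | rfl | rfl)
    · exact memspan2 (X 2 * X 3) (X 2 ^ 2 - 2 * X 1 * X 3) (by ring)
    · exact memspan2 (3 * X 1 * X 3 - 2 * X 2 ^ 2) 0 (by ring)
    · exact memspan2 (X 1 * X 2 - 3 * X 0 * X 3) 0 (by ring)
    · exact memspan2 (2 * X 0 * X 2 - X 1 ^ 2) 0 (by ring)
  have hIJ3 : I ≤ S3I := by
    rw [hI, Ideal.span_le]
    rintro x (rfl | rfl | rfl | rfl)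
    · refine memspan3 (C ((1:ℚ)/2) * X 1) 0 (-(C ((1:ℚ)/2) * X 3)) ?_
      linear_combination (-(X 1 * X 2 ^ 2 - 2 * X 1 ^ 2 * X 3 + X 0 * X 2 * X 3)) * hhalf
    · exact memspan3 (-(X 0)) 0 0 (by ring)
    · exact memspan3 0 (X 0) 0 (by ring)
    · exact memspan3 0 0 (-(X 0)) (by ring)
  have hprod : J1 * J2 * S3I ≤ I := by
    rw [hJ1, hJ2, S3I, Ideal.span_mul_span, Ideal.span_mul_span, Ideal.span_le]
    rintro x hx
    rw [Set.mem_mul] at hx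
    obtain ⟨s, hs, t, ht, rfl⟩ := hx
    obtain ⟨a, ha, b, hb, rfl⟩ := hs
    rw [hI]
    simp only [Set.mem_insert_iff, Set.mem_singleton_iff] at ha hb ht
    rcases ha with rfl | rfl <;> rcases hb with rfl | rfl <;>
      rcases ht with rfl | rfl | rfl
    · exact memspan4 0 (-(X 0)) 0 0 (by ring)
    · exact memspan4 0 0 (X 0) 0 (by ring)
    · exact memspan4 0 0 0 (-(X 0)) (by ring)
    · exact memspan4 0 (-(X 1)) 0 0 (by ring)
    · exact memspan4 0 0 (X 1) 0 (by ring)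
    · exact memspan4 0 0 0 (-(X 1)) (by ring)
    · exact memspan4 0 (-(X 2 ^ 2 - 2 * X 1 * X 3)) 0 0 (by ring)
    · exact memspan4 0 0 (X 2 ^ 2 - 2 * X 1 * X 3) 0 (by ring)
    · exact memspan4 0 0 0 (-(X 2 ^ 2 - 2 * X 1 * X 3)) (by ring)
    · exact memspan4 (2 * X 2 ^ 2 - 3 * X 1 * X 3) (X 2 * X 3) 0 0 (by ring)
    · exact memspan4 (X 1 * X 2 - 3 * X 0 * X 3) 0 (-(X 2 * X 3)) 0 (by ring)
    · exact memspan4 (X 1 ^ 2 - 2 * X 0 * X 2) 0 0 (X 2 * X 3) (by ring)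
  apply le_antisymm
  · refine le_inf (le_inf ?_ ?_) ?_
    · exact le_trans (Ideal.radical_mono hIJ1) (le_of_eq S1_isPrime.radical)
    · exact le_trans (Ideal.radical_mono hIJ2) (le_of_eq S2_isPrime.radical)
    · exact le_trans (Ideal.radical_mono hIJ3) (le_of_eq S3_isPrime.radical)
  · intro x hx
    obtain ⟨⟨hx1, hx2⟩, hx3⟩ := hx
    have hcube : x * x * x ∈ J1 * J2 * S3I :=
      Ideal.mul_mem_mul (Ideal.mul_mem_mul hx1 hx2) hx3
    have : x ^ 3 ∈ I := by
      rw [pow_succ, pow_two]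
      exact hprod hcube
    exact ⟨3, this⟩

end
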